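/- For n ≥ m+2, the Grundy domination number of the m-th power of the n-path satisfies γ_gr(P_n^m) = n − m. -/

import Mathlib

namespace GrundyDom

/-- Closed neighborhood N[v]. -/
def cn {V : Type*} (G : SimpleGraph V) (v : V) : Set V := insert v (G.neighborSet v)

/-- Union of closed neighborhoods of the vertices of a list. -/
def cnUnion {V : Type*} (G : SimpleGraph V) (L : List V) : Set V := ⋃ v ∈ L, cn G v

/-- Private neighborhood of `v` with respect to the first `i` entries of `S`:
`N[v] \ (N[v_1] ∪ ... ∪ N[v_i])`. -/
def PN {V : Type*} (G : SimpleGraph V) (S : List V) (i : ℕ) (v : V) : Set V :=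
  cn G v \ cnUnion G (S.take i)

/-- A legal dominating sequence: distinct vertices, dominating set, and every
vertex of the sequence has a nonempty private neighborhood w.r.t. its predecessors. -/
structure IsLegal {V : Type*} (G : SimpleGraph V) (S : List V) : Prop where
  nodup : S.Nodup
  dominates : ∀ v : V, ∃ u ∈ S, v ∈ cn G u
  legal : ∀ i : Fin S.length, (PN G S i.val (S.get i)).Nonempty

/-- The set `I_S` of vertices that footprint themselves in `S`. -/
def selfFoot {V : Type*} (G : SimpleGraph V) (S : List V) : Set V :=
  {v | ∃ i : Fin S.length, S.get i = v ∧ v ∈ PN G S i.val v}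

/-- Grundy domination number: maximum length of a legal dominating sequence. -/
noncomputable def gammaGr {V : Type*} (G : SimpleGraph V) : ℕ :=
  sSup {k | ∃ S : List V, IsLegal G S ∧ S.length = k}

/-- `γ_gr(G, I)`: maximum length of a legal dominating sequence `S` with `I_S = I`. -/
noncomputable def gammaGrOn {V : Type*} (G : SimpleGraph V) (I : Set V) : ℕ :=
  sSup {k | ∃ S : List V, IsLegal G S ∧ selfFoot G S = I ∧ S.length = k}

/-- `γ_gr^u(G)`: maximum of `γ_gr(G, I)` over independent sets `I` containing `u`. -/
noncomputable def gammaGrVert {V : Type*} (G : SimpleGraph V) (u : V) : ℕ :=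
  sSup {k | ∃ I : Set V, (∀ ⦃a⦄, a ∈ I → ∀ ⦃b⦄, b ∈ I → a ≠ b → ¬ G.Adj a b) ∧
    u ∈ I ∧ k = gammaGrOn G I}

/-- Independent set of a graph. -/
def IsIndep {V : Type*} (G : SimpleGraph V) (I : Set V) : Prop :=
  ∀ ⦃u⦄, u ∈ I → ∀ ⦃v⦄, v ∈ I → u ≠ v → ¬ G.Adj u v

/-- The X-join product `G ↩ 𝓡`: replace each vertex `v` of `G` by the graph `R v`. -/
def XJoin {V : Type*} (G : SimpleGraph V) {W : V → Type*} (R : ∀ v, SimpleGraph (W v)) :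
    SimpleGraph (Σ v, W v) where
  Adj x y := G.Adj x.1 y.1 ∨ ∃ h : x.1 = y.1, (R y.1).Adj (h ▸ x.2) y.2
  symm := ⟨by
    rintro ⟨a, xa⟩ ⟨b, yb⟩ (h | ⟨h, hadj⟩)
    · exact Or.inl h.symm
    · dsimp at h hadj
      subst h
      exact Or.inr ⟨rfl, hadj.symm⟩⟩
  loopless := ⟨by
    rintro ⟨a, xa⟩ (h | ⟨h, hadj⟩)
    · exact G.irrefl h
    · exact (R a).irrefl hadj⟩

/-- The lexicographic product `G ∘ H`. -/
def Lex {V W : Type*} (G : SimpleGraph V) (H : SimpleGraph W) : SimpleGraph (V × W) where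
  Adj x y := G.Adj x.1 y.1 ∨ (x.1 = y.1 ∧ H.Adj x.2 y.2)
  symm := ⟨by
    rintro x y (h | ⟨h1, h2⟩)
    · exact Or.inl h.symm
    · exact Or.inr ⟨h1.symm, h2.symm⟩⟩
  loopless := ⟨by
    rintro x (h | ⟨_, h⟩)
    · exact G.irrefl h
    · exact H.irrefl h⟩

/-- The replacement graph `G_{u ↩ H}`: replace the vertex `u` of `G` by `H`. -/
def Replace {V : Type*} (G : SimpleGraph V) (u : V) {W : Type*} (H : SimpleGraph W) :
    SimpleGraph ({v : V // v ≠ u} ⊕ W) where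
  Adj x y :=
    match x, y with
    | Sum.inl a, Sum.inl b => G.Adj a.1 b.1
    | Sum.inl a, Sum.inr _ => G.Adj a.1 u
    | Sum.inr _, Sum.inl b => G.Adj u b.1
    | Sum.inr h1, Sum.inr h2 => H.Adj h1 h2
  symm := ⟨by rintro (a|a) (b|b) h <;> exact h.symm⟩
  loopless := ⟨by rintro (a|a) h <;> exact h.ne rfl⟩

/-- `C_n^m`: the m-th power of the n-cycle, on vertex set `ZMod n`;
two vertices are adjacent iff their circular distance is between 1 and m. -/
def cyclePow (n m : ℕ) : SimpleGraph (ZMod n) where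
  Adj i j := i ≠ j ∧ ∃ k : ℕ, 1 ≤ k ∧ k ≤ m ∧ (j = i + k ∨ i = j + k)
  symm := ⟨by
    rintro i j ⟨hne, k, h1, h2, h3⟩
    exact ⟨hne.symm, k, h1, h2, h3.symm⟩⟩
  loopless := ⟨fun i h => h.1 rfl⟩

/-- `P_n^m`: the m-th power of the n-path, on vertex set `Fin n`
(vertex `i` represents the `(i+1)`-st vertex of the path);
two vertices adjacent iff their distance is between 1 and m. -/
def pathPow (n m : ℕ) : SimpleGraph (Fin n) where
  Adj i j := i ≠ j ∧ Nat.dist i.val j.val ≤ m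
  symm := ⟨by
    rintro i j ⟨hne, hd⟩
    exact ⟨hne.symm, by rwa [Nat.dist_comm]⟩⟩
  loopless := ⟨fun i h => h.1 rfl⟩

end GrundyDom

namespace GrundyDom

lemma mem_cn_iff {n m : ℕ} (u v : Fin n) :
    v ∈ cn (pathPow n m) u ↔ Nat.dist u.val v.val ≤ m := by
  simp only [cn, pathPow, SimpleGraph.neighborSet, Set.mem_insert_iff, Set.mem_setOf_eq]
  constructor
  · rintro (rfl | ⟨-, h⟩)
    · simp [Nat.dist_self]
    · exact h
  · intro h
    rcases eq_or_ne v u with rfl | hne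
    · exact Or.inl rfl
    · exact Or.inr ⟨fun e => hne e.symm, h⟩

lemma mem_cnUnion {V : Type*} (G : SimpleGraph V) (L : List V) (x : V) :
    x ∈ cnUnion G L ↔ ∃ v ∈ L, x ∈ cn G v := by simp [cnUnion]

lemma get_mem_take {α : Type*} {S : List α} {i j : ℕ} (hij : i < j) (hi : i < S.length) :
    S[i] ∈ S.take j := by
  have h1 : i < (S.take j).length := by simp [List.length_take]; omega
  have h2 := List.getElem_mem h1
  rwa [List.getElem_take] at h2

lemma length_le_of_legal {n m : ℕ} (hm : 1 ≤ m) (hn : m + 2 ≤ n)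
    (S : List (Fin n)) (h : IsLegal (pathPow n m) S) : S.length ≤ n - m := by
  set G := pathPow n m with hG
  set k := S.length with hk
  rcases Nat.eq_zero_or_pos k with hk0 | hk1
  · omega
  choose w hw using h.legal
  -- key: for i < j, w j ∉ cn G (S.get i)
  have key : ∀ i j : Fin k, i.val < j.val → w j ∉ cn G (S.get i) := by
    intro i j hij hmem
    have hj2 := (hw j).2
    apply hj2
    rw [mem_cnUnion]
    refine ⟨S.get i, ?_, hmem⟩
    simpa using get_mem_take (S := S) hij i.isLt
  have hwinj : Function.Injective w := by
    intro i j hij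
    by_contra hne
    rcases lt_or_gt_of_ne (fun e => hne (Fin.ext e)) with hlt | hlt
    · exact key i j hlt (hij ▸ (hw i).1)
    · exact key j i hlt (hij.symm ▸ (hw j).1)
  set i0 : Fin k := ⟨0, hk1⟩ with hi0
  set v0 := S.get i0 with hv0
  set A : Set (Fin n) := cn G v0 with hA
  set B : Set (Fin n) := w '' {i : Fin k | 0 < i.val} with hB
  have hdisj : Disjoint A B := by
    rw [Set.disjoint_right]
    rintro x ⟨j, hj, rfl⟩
    exact key i0 j hj
  -- card of A ≥ m + 1
  have ha : v0.val < n := v0.isLt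
  have hι : ∀ j : Fin (m+1), v0.val - min v0.val m + j.val < n := by
    intro j; have := j.isLt; omega
  set ι : Fin (m+1) → Fin n := fun j => ⟨v0.val - min v0.val m + j.val, hι j⟩ with hιdef
  have hιinj : Function.Injective ι := by
    intro a b hab
    have : (ι a).val = (ι b).val := by rw [hab]
    simp only [hιdef] at this
    exact Fin.ext (by omega)
  have hιsub : Set.range ι ⊆ A := by
    rintro x ⟨j, rfl⟩
    rw [hA, mem_cn_iff]
    have := j.isLt
    simp only [hιdef, Nat.dist]
    omega
  have hAcard : m + 1 ≤ A.ncard := by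
    have h1 : (Set.range ι).ncard = m + 1 := by
      rw [← Set.image_univ, Set.ncard_image_of_injective _ hιinj, Set.ncard_univ]
      simp
    calc m + 1 = (Set.range ι).ncard := h1.symm
      _ ≤ A.ncard := Set.ncard_le_ncard hιsub (Set.toFinite A)
  have hBcard : B.ncard = k - 1 := by
    rw [hB, Set.ncard_image_of_injective _ hwinj]
    have : {i : Fin k | 0 < i.val} = {i0}ᶜ := by
      ext i; simp [hi0, Fin.ext_iff, Nat.pos_iff_ne_zero]
    rw [this, Set.compl_eq_univ_diff, Set.ncard_diff_singleton_of_mem (Set.mem_univ i0),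
      Set.ncard_univ]
    simp
  have hunion : A.ncard + B.ncard ≤ n := by
    rw [← Set.ncard_union_eq hdisj (Set.toFinite A) (Set.toFinite B)]
    calc (A ∪ B).ncard ≤ (Set.univ : Set (Fin n)).ncard :=
          Set.ncard_le_ncard (Set.subset_univ _) (Set.toFinite _)
      _ = n := by simp [Set.ncard_univ]
  omega

lemma legal_seq {n m : ℕ} (hm : 1 ≤ m) (hn : m + 2 ≤ n) :
    ∃ S : List (Fin n), IsLegal (pathPow n m) S ∧ S.length = n - m := by
  set G := pathPow n m with hG
  set f : Fin (n - m) → Fin n := fun i => ⟨i.val, by have := i.isLt; omega⟩ with hf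
  refine ⟨List.ofFn f, ⟨?_, ?_, ?_⟩, by simp⟩
  · rw [List.nodup_ofFn]
    intro a b hab
    have h2 : (f a).val = (f b).val := congrArg Fin.val hab
    simp only [hf] at h2
    exact Fin.ext h2
  · intro v
    have hv := v.isLt
    refine ⟨⟨min v.val (n - m - 1), by omega⟩, ?_, ?_⟩
    · rw [List.mem_ofFn]
      exact ⟨⟨min v.val (n - m - 1), by omega⟩, rfl⟩
    · rw [mem_cn_iff]
      simp only [Nat.dist]
      omega
  · intro i
    have hlen : (List.ofFn f).length = n - m := by simp
    have hival : i.val < n - m := by have := i.isLt; omega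
    have hget : (List.ofFn f).get i = ⟨i.val, by omega⟩ := by
      simp [List.get_ofFn, hf]
    refine ⟨⟨i.val + m, by omega⟩, ?_, ?_⟩
    · rw [hget, mem_cn_iff]
      simp only [Nat.dist]
      omega
    · intro hx
      rw [mem_cnUnion] at hx
      obtain ⟨v, hv, hxv⟩ := hx
      rw [List.mem_iff_getElem] at hv
      obtain ⟨j, hj, hvj⟩ := hv
      have hj2 : j < i.val ∧ j < n - m := by
        simp [List.length_take] at hj; omega
      rw [List.getElem_take, List.getElem_ofFn] at hvj
      subst hvj
      rw [mem_cn_iff] at hxv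
      simp only [Nat.dist, hf] at hxv
      omega

end GrundyDom

open GrundyDom Finset

/-- `γ_gr(P_n^m) = n - m` for `n ≥ m+2`. -/
theorem stmt15 (n m : ℕ) (hm : 1 ≤ m) (hn : m + 2 ≤ n) :
    (gammaGr (pathPow n m) : ℤ) = (n : ℤ) - m := by
  obtain ⟨S, hS, hSlen⟩ := legal_seq (n := n) (m := m) hm hn
  have hub : ∀ k ∈ {k | ∃ S : List (Fin n), IsLegal (pathPow n m) S ∧ S.length = k},
      k ≤ n - m := by
    rintro k ⟨T, hT, rfl⟩
    exact length_le_of_legal hm hn T hT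
  have hmem : n - m ∈ {k | ∃ S : List (Fin n), IsLegal (pathPow n m) S ∧ S.length = k} :=
    ⟨S, hS, hSlen⟩
  have hval : gammaGr (pathPow n m) = n - m := by
    unfold gammaGr
    exact le_antisymm (csSup_le ⟨_, hmem⟩ hub) (le_csSup ⟨n - m, hub⟩ hmem)
  rw [hval, Nat.cast_sub (by omega : m ≤ n)]
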